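/- Let k be a field, let (L, K, M) be a field correspondence over k, let Ω be an algebraically closed field extension of k of transcendence degree 1, and fix a k-algebra embedding PQ : M → Ω with restrictions P = PQ|_L and Q = PQ|_K. Let G_gen be the connected component of the edge PQ in the full generic graph, and let E_∞ ⊆ Ω be the subfield generated by the images of all vertices and edges of G_gen. Let G_P = Gal(E_∞ / P(L)) and G_Q = Gal(E_∞ / Q(K)), consisting of k-algebra automorphisms of E_∞ fixing P(L), respectively Q(K), pointwise, and let A^{PQ} be the subgroup of Aut_k(E_∞) generated by G_P and G_Q. Then every edge e of G_gen has image contained in E_∞, post-composition by elements of A^{PQ} maps edges of G_gen to edges of G_gen, and for any two edges e, e' of G_gen there exists σ ∈ A^{PQ} with σ ∘ e = e'. In particular A^{PQ} acts transitively on the edges of G_gen, preserving the two-coloring of the vertices. -/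

import Mathlib

/-- A field extension `F/k` has transcendence degree one iff some single element
forms a transcendence basis of `F` over `k`. -/
def HasTrdegOne (k F : Type*) [Field k] [Field F] [Algebra k F] : Prop :=
  ∃ x : F, IsTranscendenceBasis k (fun _ : Unit => x)

section GenericGraph

variable {k M : Type*} [Field k] [Field M] [Algebra k M]
  (L K : IntermediateField k M)
  {Ω : Type*} [Field Ω] [Algebra k Ω]

/-- Two edges (that is, `k`-algebra homomorphisms `M → Ω`) of the full generic graph are
incident to a common vertex: they have the same restriction to `L` (a common blue vertex)
or the same restriction to `K` (a common red vertex). -/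
def EdgeStep (e e' : M →ₐ[k] Ω) : Prop :=
  e.comp L.val = e'.comp L.val ∨ e.comp K.val = e'.comp K.val

/-- The edge `e` lies in the connected component `G_gen` of the distinguished edge `PQ`
of the full generic graph. -/
def InGenericComponent (PQ e : M →ₐ[k] Ω) : Prop :=
  Relation.ReflTransGen (EdgeStep L K) PQ e

/-- The subfield `E_∞ = E_{G_gen}` of `Ω` generated by the images of all vertices and
edges of the connected component `G_gen` of `PQ`. -/
noncomputable def componentField (PQ : M →ₐ[k] Ω) : IntermediateField k Ω :=
  (⨆ e : {e : M →ₐ[k] Ω // InGenericComponent L K PQ e}, (e.1).fieldRange) ⊔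
  (⨆ e : {e : M →ₐ[k] Ω // InGenericComponent L K PQ e}, ((e.1).comp L.val).fieldRange) ⊔
  (⨆ e : {e : M →ₐ[k] Ω // InGenericComponent L K PQ e}, ((e.1).comp K.val).fieldRange)

/-- `G_P = Gal(E_∞ / P(L))`: the subgroup of `k`-algebra automorphisms of `E_∞` fixing
the image `P(L)` pointwise. -/
noncomputable def galP (PQ : M →ₐ[k] Ω) :
    Subgroup (componentField L K PQ ≃ₐ[k] componentField L K PQ) :=
  fixingSubgroup (componentField L K PQ ≃ₐ[k] componentField L K PQ)
    {z : componentField L K PQ | (z : Ω) ∈ (PQ.comp L.val).fieldRange}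

/-- `G_Q = Gal(E_∞ / Q(K))`: the subgroup of `k`-algebra automorphisms of `E_∞` fixing
the image `Q(K)` pointwise. -/
noncomputable def galQ (PQ : M →ₐ[k] Ω) :
    Subgroup (componentField L K PQ ≃ₐ[k] componentField L K PQ) :=
  fixingSubgroup (componentField L K PQ ≃ₐ[k] componentField L K PQ)
    {z : componentField L K PQ | (z : Ω) ∈ (PQ.comp K.val).fieldRange}

/-- `A^{PQ}`: the subgroup of `Aut_k(E_∞)` generated by `G_P` and `G_Q`. -/
noncomputable def APQ (PQ : M →ₐ[k] Ω) :
    Subgroup (componentField L K PQ ≃ₐ[k] componentField L K PQ) :=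
  galP L K PQ ⊔ galQ L K PQ

end GenericGraph

section AuxFieldTheory

variable {k : Type*} [Field k] {Ω : Type*} [Field Ω] [Algebra k Ω]

theorem isAlgebraic_of_ringHom {R1 R2 : Type*} [CommRing R1] [CommRing R2]
    [Algebra R1 Ω] [Algebra R2 Ω] (j : R1 →+* R2) (hj : Function.Injective j)
    (hcomm : (algebraMap R2 Ω).comp j = algebraMap R1 Ω) {w : Ω}
    (hw : IsAlgebraic R1 w) : IsAlgebraic R2 w := by
  obtain ⟨p, hp0, hp⟩ := hw
  refine ⟨p.map j, (Polynomial.map_ne_zero_iff hj).2 hp0, ?_⟩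
  rw [Polynomial.aeval_def, Polynomial.eval₂_map, hcomm, ← Polynomial.aeval_def]
  exact hp

theorem exchange_aux {y u : Ω} (hy : IsTranscendenceBasis k (fun _ : Unit => y))
    (hu : Transcendental k u) :
    IsAlgebraic (Algebra.adjoin k (Set.range fun _ : Unit => u)) y := by
  by_contra hT
  have hu_ind : AlgebraicIndependent k (fun _ : Unit => u) :=
    algebraicIndependent_unique_type_iff.2 hu
  have hopt : AlgebraicIndependent k (fun o : Option Unit => o.elim y fun _ => u) :=
    (hu_ind.option_iff_transcendental y).2 hT
  have hne : y ≠ u := by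
    rintro rfl
    exact hT (isAlgebraic_algebraMap
      (⟨y, Algebra.subset_adjoin ⟨(), rfl⟩⟩ : Algebra.adjoin k (Set.range fun _ : Unit => y)))
  have hinj : Function.Injective (fun o : Option Unit => o.elim y fun _ => u) := by
    intro a b hab
    match a, b with
    | none, none => rfl
    | some x, some y => exact congrArg some (Subsingleton.elim _ _)
    | none, some _ => exact absurd hab hne
    | some _, none => exact absurd hab.symm hne
  have hsub := (algebraicIndependent_subtype_range hinj).2 hopt
  have hmax := hy.2 _ hsub (by rintro _ ⟨_, rfl⟩; exact ⟨none, rfl⟩)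
  have hu_mem : u ∈ Set.range (fun o : Option Unit => o.elim y fun _ => u) := ⟨some (), rfl⟩
  rw [← hmax] at hu_mem
  obtain ⟨_, h⟩ := hu_mem
  exact hne h

theorem isAlgebraic_over_of_transcendental (htrΩ : HasTrdegOne k Ω)
    (F : IntermediateField k Ω) {u : Ω} (huF : u ∈ F) (hu : Transcendental k u)
    (w : Ω) : IsAlgebraic F w := by
  obtain ⟨y, hy⟩ := htrΩ
  have h1 : IsAlgebraic (Algebra.adjoin k (Set.range fun _ : Unit => u)) y :=
    exchange_aux hy hu
  have hle : Algebra.adjoin k (Set.range fun _ : Unit => u) ≤ F.toSubalgebra :=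
    Algebra.adjoin_le (by rintro _ ⟨_, rfl⟩; exact huF)
  have h2 : IsAlgebraic F y := by
    let j : (Algebra.adjoin k (Set.range fun _ : Unit => u)) →+* F :=
      { toFun := fun s => (⟨s.1, hle s.2⟩ : F),
        map_one' := rfl, map_mul' := fun _ _ => rfl,
        map_zero' := rfl, map_add' := fun _ _ => rfl }
    refine isAlgebraic_of_ringHom j ?_ ?_ h1
    · intro a b hab
      have h := congrArg Subtype.val hab
      exact Subtype.ext h
    · exact RingHom.ext fun s => rfl
  haveI : FiniteDimensional F (IntermediateField.adjoin F {y}) :=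
    IntermediateField.adjoin.finiteDimensional h2.isIntegral
  have h3 : IsAlgebraic (IntermediateField.adjoin k (Set.range fun _ : Unit => y)) w :=
    (hy.isAlgebraic_field).isAlgebraic w
  have hle2 : IntermediateField.adjoin k (Set.range fun _ : Unit => y) ≤
      IntermediateField.restrictScalars k (IntermediateField.adjoin F {y}) := by
    rw [IntermediateField.adjoin_le_iff]
    rintro _ ⟨_, rfl⟩
    exact (IntermediateField.mem_restrictScalars k).2
      (IntermediateField.mem_adjoin_simple_self F y)
  have h4 : IsAlgebraic (IntermediateField.adjoin F {y}) w := by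
    let j : (IntermediateField.adjoin k (Set.range fun _ : Unit => y)) →+*
        (IntermediateField.adjoin F {y}) :=
      { toFun := fun s => (⟨s.1, (IntermediateField.mem_restrictScalars k).1 (hle2 s.2)⟩ :
          IntermediateField.adjoin F {y}),
        map_one' := rfl, map_mul' := fun _ _ => rfl,
        map_zero' := rfl, map_add' := fun _ _ => rfl }
    refine isAlgebraic_of_ringHom j ?_ ?_ h3
    · intro a b hab
      have h := congrArg Subtype.val hab
      exact Subtype.ext h
    · exact RingHom.ext fun s => rfl
  haveI : Algebra.IsIntegral F (IntermediateField.adjoin F {y}) :=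
    Algebra.IsIntegral.of_finite _ _
  exact (isIntegral_trans (A := IntermediateField.adjoin F {y}) w h4.isIntegral).isAlgebraic

end AuxFieldTheory

section GraphAux

variable {k M : Type*} [Field k] [Field M] [Algebra k M]
  (L K : IntermediateField k M)
  {Ω : Type*} [Field Ω] [Algebra k Ω] (PQ : M →ₐ[k] Ω)

theorem mem_componentField_of_inComponent {e : M →ₐ[k] Ω}
    (he : InGenericComponent L K PQ e) (x : M) : e x ∈ componentField L K PQ := by
  have h : e.fieldRange ≤ componentField L K PQ :=
    le_trans (le_iSup (fun e : {e : M →ₐ[k] Ω // InGenericComponent L K PQ e} =>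
      (e.1 : M →ₐ[k] Ω).fieldRange) ⟨e, he⟩) (le_trans le_sup_left le_sup_left)
  exact h ⟨x, rfl⟩

theorem componentField_le_iSup :
    componentField L K PQ ≤
      ⨆ e : {e : M →ₐ[k] Ω // InGenericComponent L K PQ e}, (e.1 : M →ₐ[k] Ω).fieldRange := by
  refine sup_le (sup_le le_rfl ?_) ?_
  · refine iSup_le fun e => le_trans ?_ (le_iSup _ e)
    rintro y hy
    rw [AlgHom.mem_fieldRange] at hy
    obtain ⟨x, rfl⟩ := hy
    exact ⟨L.val x, rfl⟩
  · refine iSup_le fun e => le_trans ?_ (le_iSup _ e)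
    rintro y hy
    rw [AlgHom.mem_fieldRange] at hy
    obtain ⟨x, rfl⟩ := hy
    exact ⟨K.val x, rfl⟩

theorem comp_inComponent (τ : Ω →ₐ[k] Ω) (hτ : InGenericComponent L K PQ (τ.comp PQ))
    {e : M →ₐ[k] Ω} (he : InGenericComponent L K PQ e) :
    InGenericComponent L K PQ (τ.comp e) := by
  induction he with
  | refl => exact hτ
  | tail hb step ih =>
    refine ih.tail ?_
    rcases step with h | h
    · exact Or.inl (by rw [AlgHom.comp_assoc, AlgHom.comp_assoc, h])
    · exact Or.inr (by rw [AlgHom.comp_assoc, AlgHom.comp_assoc, h])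

theorem comp_mem_componentField (τ : Ω →ₐ[k] Ω) (hτ : InGenericComponent L K PQ (τ.comp PQ))
    {z : Ω} (hz : z ∈ componentField L K PQ) : τ z ∈ componentField L K PQ := by
  have h1 := componentField_le_iSup L K PQ hz
  have h2 : (⨆ e : {e : M →ₐ[k] Ω // InGenericComponent L K PQ e},
      (e.1 : M →ₐ[k] Ω).fieldRange) ≤
      IntermediateField.comap τ (componentField L K PQ) := by
    refine iSup_le fun e => ?_
    rintro y hy
    rw [AlgHom.mem_fieldRange] at hy
    obtain ⟨x, rfl⟩ := hy
    exact mem_componentField_of_inComponent L K PQ (comp_inComponent L K PQ τ hτ e.2) x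
  exact h2 h1

/-- Corestriction of an edge to the component field. -/
def codres (e : M →ₐ[k] Ω) (h : ∀ x, e x ∈ componentField L K PQ) :
    M →ₐ[k] componentField L K PQ where
  toFun x := ⟨e x, h x⟩
  map_one' := Subtype.ext (map_one e)
  map_mul' a b := Subtype.ext (map_mul e a b)
  map_zero' := Subtype.ext (map_zero e)
  map_add' a b := Subtype.ext (map_add e a b)
  commutes' r := Subtype.ext (by simp)

open Classical in
/-- Post-composition of an edge by an automorphism of the component field. -/
noncomputable def poste (σ : componentField L K PQ ≃ₐ[k] componentField L K PQ)
    (e : M →ₐ[k] Ω) : M →ₐ[k] Ω :=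
  if h : ∀ x, e x ∈ componentField L K PQ then
    (componentField L K PQ).val.comp ((σ : componentField L K PQ →ₐ[k] componentField L K PQ).comp
      (codres L K PQ e h))
  else e

theorem poste_apply (σ : componentField L K PQ ≃ₐ[k] componentField L K PQ)
    (e : M →ₐ[k] Ω) (h : ∀ x, e x ∈ componentField L K PQ) (x : M) :
    poste L K PQ σ e x = (σ ⟨e x, h x⟩ : Ω) := by
  rw [poste, dif_pos h]; rfl

theorem poste_step (σ : componentField L K PQ ≃ₐ[k] componentField L K PQ)
    {e e' : M →ₐ[k] Ω} (h : ∀ x, e x ∈ componentField L K PQ)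
    (h' : ∀ x, e' x ∈ componentField L K PQ) (st : EdgeStep L K e e') :
    EdgeStep L K (poste L K PQ σ e) (poste L K PQ σ e') := by
  rcases st with hs | hs
  · refine Or.inl (AlgHom.ext fun x => ?_)
    have hx : e (L.val x) = e' (L.val x) := AlgHom.congr_fun hs x
    show poste L K PQ σ e (L.val x) = poste L K PQ σ e' (L.val x)
    rw [poste_apply L K PQ σ e h, poste_apply L K PQ σ e' h']
    exact congrArg Subtype.val (congrArg σ (Subtype.ext hx))
  · refine Or.inr (AlgHom.ext fun x => ?_)
    have hx : e (K.val x) = e' (K.val x) := AlgHom.congr_fun hs x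
    show poste L K PQ σ e (K.val x) = poste L K PQ σ e' (K.val x)
    rw [poste_apply L K PQ σ e h, poste_apply L K PQ σ e' h']
    exact congrArg Subtype.val (congrArg σ (Subtype.ext hx))

theorem poste_one (e : M →ₐ[k] Ω) (h : ∀ x, e x ∈ componentField L K PQ) :
    poste L K PQ 1 e = e := by
  refine AlgHom.ext fun x => ?_
  rw [poste_apply L K PQ 1 e h]
  rfl

theorem poste_mul (σ σ' : componentField L K PQ ≃ₐ[k] componentField L K PQ)
    (e : M →ₐ[k] Ω) (h : ∀ x, e x ∈ componentField L K PQ) :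
    poste L K PQ (σ * σ') e = poste L K PQ σ (poste L K PQ σ' e) := by
  have h' : ∀ x, poste L K PQ σ' e x ∈ componentField L K PQ := fun x => by
    rw [poste_apply L K PQ σ' e h]; exact (σ' ⟨e x, h x⟩).2
  refine AlgHom.ext fun x => ?_
  rw [poste_apply L K PQ (σ * σ') e h, poste_apply L K PQ σ _ h', AlgEquiv.mul_apply]
  exact congrArg Subtype.val (congrArg σ (Subtype.ext (poste_apply L K PQ σ' e h x).symm))

theorem poste_inComponent (σ : componentField L K PQ ≃ₐ[k] componentField L K PQ)
    (hbase : EdgeStep L K PQ (poste L K PQ σ PQ))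
    {e : M →ₐ[k] Ω} (he : InGenericComponent L K PQ e) :
    InGenericComponent L K PQ (poste L K PQ σ e) := by
  induction he with
  | refl => exact Relation.ReflTransGen.single hbase
  | @tail b c hb step ih =>
    exact ih.tail (poste_step L K PQ σ
      (fun x => mem_componentField_of_inComponent L K PQ hb x)
      (fun x => mem_componentField_of_inComponent L K PQ (hb.tail step) x) step)

theorem poste_inComponent_of_galP {σ : componentField L K PQ ≃ₐ[k] componentField L K PQ}
    (hσ : σ ∈ galP L K PQ) {e : M →ₐ[k] Ω} (he : InGenericComponent L K PQ e) :
    InGenericComponent L K PQ (poste L K PQ σ e) := by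
  refine poste_inComponent L K PQ σ ?_ he
  refine Or.inl (AlgHom.ext fun x => ?_)
  show PQ (L.val x) = poste L K PQ σ PQ (L.val x)
  have hmem : ∀ y, PQ y ∈ componentField L K PQ := fun y =>
    mem_componentField_of_inComponent L K PQ Relation.ReflTransGen.refl y
  rw [poste_apply L K PQ σ PQ hmem]
  have hfix := (mem_fixingSubgroup_iff _).1 hσ
    (⟨PQ (L.val x), hmem (L.val x)⟩ : componentField L K PQ) ⟨x, rfl⟩
  exact (congrArg Subtype.val hfix).symm

theorem poste_inComponent_of_galQ {σ : componentField L K PQ ≃ₐ[k] componentField L K PQ}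
    (hσ : σ ∈ galQ L K PQ) {e : M →ₐ[k] Ω} (he : InGenericComponent L K PQ e) :
    InGenericComponent L K PQ (poste L K PQ σ e) := by
  refine poste_inComponent L K PQ σ ?_ he
  refine Or.inr (AlgHom.ext fun x => ?_)
  show PQ (K.val x) = poste L K PQ σ PQ (K.val x)
  have hmem : ∀ y, PQ y ∈ componentField L K PQ := fun y =>
    mem_componentField_of_inComponent L K PQ Relation.ReflTransGen.refl y
  rw [poste_apply L K PQ σ PQ hmem]
  have hfix := (mem_fixingSubgroup_iff _).1 hσ
    (⟨PQ (K.val x), hmem (K.val x)⟩ : componentField L K PQ) ⟨x, rfl⟩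
  exact (congrArg Subtype.val hfix).symm

theorem good_of_mem_APQ {σ : componentField L K PQ ≃ₐ[k] componentField L K PQ}
    (hσ : σ ∈ APQ L K PQ) :
    (∀ e : M →ₐ[k] Ω, InGenericComponent L K PQ e →
      InGenericComponent L K PQ (poste L K PQ σ e)) ∧
    (∀ e : M →ₐ[k] Ω, InGenericComponent L K PQ e →
      InGenericComponent L K PQ (poste L K PQ σ⁻¹ e)) := by
  have hgen : ∀ τ : componentField L K PQ ≃ₐ[k] componentField L K PQ,
      τ ∈ ((galP L K PQ : Set _) ∪ (galQ L K PQ : Set _)) →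
      ∀ e : M →ₐ[k] Ω, InGenericComponent L K PQ e →
        InGenericComponent L K PQ (poste L K PQ τ e) := by
    rintro τ (ht | ht) e he
    · exact poste_inComponent_of_galP L K PQ ht he
    · exact poste_inComponent_of_galQ L K PQ ht he
  rw [APQ, Subgroup.sup_eq_closure] at hσ
  refine Subgroup.closure_induction
    (p := fun g _ => (∀ e : M →ₐ[k] Ω, InGenericComponent L K PQ e →
        InGenericComponent L K PQ (poste L K PQ g e)) ∧
      (∀ e : M →ₐ[k] Ω, InGenericComponent L K PQ e →
        InGenericComponent L K PQ (poste L K PQ g⁻¹ e)))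
    ?_ ?_ ?_ ?_ hσ
  · rintro τ ht
    refine ⟨hgen τ ht, hgen τ⁻¹ ?_⟩
    rcases ht with ht | ht
    · exact Or.inl (inv_mem ht)
    · exact Or.inr (inv_mem ht)
  · constructor
    · intro e he
      rw [poste_one L K PQ e (fun x => mem_componentField_of_inComponent L K PQ he x)]
      exact he
    · intro e he
      rw [inv_one, poste_one L K PQ e (fun x => mem_componentField_of_inComponent L K PQ he x)]
      exact he
  · rintro a b _ _ ⟨ha1, ha2⟩ ⟨hb1, hb2⟩
    constructor
    · intro e he
      rw [poste_mul L K PQ a b e (fun x => mem_componentField_of_inComponent L K PQ he x)]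
      exact ha1 _ (hb1 e he)
    · intro e he
      rw [mul_inv_rev,
        poste_mul L K PQ b⁻¹ a⁻¹ e (fun x => mem_componentField_of_inComponent L K PQ he x)]
      exact hb2 _ (ha2 e he)
  · rintro a _ ⟨ha1, ha2⟩
    exact ⟨ha2, by rw [inv_inv]; exact ha1⟩

end GraphAux

section ExtAux

variable {k M : Type*} [Field k] [Field M] [Algebra k M]
  (L K : IntermediateField k M)
  {Ω : Type*} [Field Ω] [Algebra k Ω] (PQ : M →ₐ[k] Ω)

theorem transcendental_map {x : M} (hx : Transcendental k x) : Transcendental k (PQ x) := by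
  intro halg
  apply hx
  obtain ⟨p, hp0, hp⟩ := halg
  refine ⟨p, hp0, ?_⟩
  have h1 : PQ (Polynomial.aeval x p) = PQ 0 := by
    rw [map_zero, ← Polynomial.aeval_algHom_apply]
    exact hp
  exact PQ.toRingHom.injective h1

theorem exists_transcendental_of_finiteDimensional (htr : HasTrdegOne k M)
    (J : IntermediateField k M) [FiniteDimensional J M] :
    ∃ u ∈ J, Transcendental k u := by
  obtain ⟨x0, hx0⟩ := htr
  by_contra hcon
  push_neg at hcon
  haveI : Algebra.IsAlgebraic k J :=
    ⟨fun u => IntermediateField.isAlgebraic_iff.2 (not_not.1 (hcon u.1 u.2))⟩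
  haveI : Algebra.IsAlgebraic J M := Algebra.IsAlgebraic.of_finite J M
  haveI : Algebra.IsAlgebraic k M := Algebra.IsAlgebraic.trans k J M
  have htx : Transcendental k x0 := algebraicIndependent_unique_type_iff.1 hx0.1
  exact htx (Algebra.IsAlgebraic.isAlgebraic x0)

theorem lift_ringHom {M Ω₁ Ω₂ : Type*} [Field M] [Field Ω₁] [Field Ω₂] [IsAlgClosed Ω₂]
    (g : M →+* Ω₁) (h : M →+* Ω₂)
    (halg : ∀ w : Ω₁, @IsAlgebraic M Ω₁ _ _ g.toAlgebra w) :
    ∃ τ : Ω₁ →+* Ω₂, ∀ m, τ (g m) = h m := by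
  letI := g.toAlgebra
  letI := h.toAlgebra
  haveI : Algebra.IsAlgebraic M Ω₁ := ⟨halg⟩
  haveI : NoZeroSMulDivisors M Ω₁ := inferInstance
  haveI : NoZeroSMulDivisors M Ω₂ := inferInstance
  exact ⟨(IsAlgClosed.lift : Ω₁ →ₐ[M] Ω₂).toRingHom,
    fun m => (IsAlgClosed.lift : Ω₁ →ₐ[M] Ω₂).commutes m⟩

theorem ext_aux [IsAlgClosed Ω] (htr : HasTrdegOne k M) (htrΩ : HasTrdegOne k Ω)
    (J : IntermediateField k M) {u : M} (huJ : u ∈ J) (hu : Transcendental k u)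
    (f : M →ₐ[k] Ω) (hf : InGenericComponent L K PQ f) (hfJ : ∀ x ∈ J, f x = PQ x) :
    ∃ σ : componentField L K PQ ≃ₐ[k] componentField L K PQ,
      (∀ z : componentField L K PQ, (z : Ω) ∈ (PQ.comp J.val).fieldRange → σ z = z) ∧
      ∀ (x : M) (hx : PQ x ∈ componentField L K PQ),
        (σ ⟨PQ x, hx⟩ : Ω) = f x := by
  classical
  obtain ⟨x0, hx0⟩ := htr
  have htx0 : Transcendental k (PQ x0) :=
    transcendental_map PQ (algebraicIndependent_unique_type_iff.1 hx0.1)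
  -- Ω is algebraic over M via PQ
  have isalgPQ : ∀ w : Ω, @IsAlgebraic M Ω _ _ PQ.toRingHom.toAlgebra w := by
    intro w
    have hw : IsAlgebraic PQ.fieldRange w :=
      isAlgebraic_over_of_transcendental htrΩ PQ.fieldRange ⟨x0, rfl⟩ htx0 w
    let eqv := AlgEquiv.ofInjectiveField PQ
    let r1 : PQ.fieldRange →+* PQ.range :=
      { toFun := fun c => ⟨c.1, (AlgHom.mem_range _).2 (AlgHom.mem_fieldRange.1 c.2)⟩,
        map_one' := rfl, map_mul' := fun _ _ => rfl,
        map_zero' := rfl, map_add' := fun _ _ => rfl }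
    let j : PQ.fieldRange →+* M := (eqv.symm.toAlgHom.toRingHom).comp r1
    have hjinj : Function.Injective j := by
      intro a b hab
      have h1 : r1 a = r1 b := eqv.symm.injective hab
      have h2 := congrArg Subtype.val h1
      exact Subtype.ext h2
    refine @isAlgebraic_of_ringHom Ω _ PQ.fieldRange M _ _ _ PQ.toRingHom.toAlgebra j hjinj ?_ w hw
    refine RingHom.ext fun c => ?_
    show PQ (eqv.symm (r1 c)) = (c : Ω)
    have h3 := congrArg Subtype.val (eqv.apply_symm_apply (r1 c))
    exact h3
  -- the lift
  obtain ⟨τ, hτ⟩ := lift_ringHom PQ.toRingHom f.toRingHom isalgPQ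
  let τk : Ω →ₐ[k] Ω :=
    { toRingHom := τ,
      commutes' := fun a => by
        show τ (algebraMap k Ω a) = algebraMap k Ω a
        calc τ (algebraMap k Ω a) = τ (PQ (algebraMap k M a)) := by rw [PQ.commutes a]
          _ = f (algebraMap k M a) := hτ _
          _ = algebraMap k Ω a := f.commutes a }
  have hτkPQ : τk.comp PQ = f := AlgHom.ext hτ
  have hτkE : ∀ z ∈ componentField L K PQ, τk z ∈ componentField L K PQ :=
    fun z hz => comp_mem_componentField L K PQ τk (by rw [hτkPQ]; exact hf) hz
  have hτkfix : ∀ x ∈ J, τk (PQ x) = PQ x := fun x hx => (hτ x).trans (hfJ x hx)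
  have hfix' : ∀ c : (PQ.comp J.val).fieldRange, τk c.1 = c.1 := by
    rintro ⟨c, hc⟩
    obtain ⟨x, hxc⟩ := AlgHom.mem_fieldRange.1 hc
    show τk c = c
    rw [← hxc]
    exact hτkfix x.1 x.2
  -- restriction to the component field
  let σ0 : componentField L K PQ →ₐ[k] componentField L K PQ :=
    { toFun := fun z => ⟨τk z.1, hτkE z.1 z.2⟩,
      map_one' := Subtype.ext (map_one τk),
      map_mul' := fun a b => Subtype.ext (map_mul τk a.1 b.1),
      map_zero' := Subtype.ext (map_zero τk),
      map_add' := fun a b => Subtype.ext (map_add τk a.1 b.1),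
      commutes' := fun r => Subtype.ext (by simp) }
  have hbij : Function.Bijective σ0 := by
    constructor
    · intro a b hab
      exact Subtype.ext (τk.toRingHom.injective (congrArg Subtype.val hab))
    · intro z
      have hutr : Transcendental k (PQ u) := transcendental_map PQ hu
      have hz : IsAlgebraic ((PQ.comp J.val).fieldRange) (z : Ω) :=
        isAlgebraic_over_of_transcendental htrΩ ((PQ.comp J.val).fieldRange)
          ⟨⟨u, huJ⟩, rfl⟩ hutr (z : Ω)
      obtain ⟨p, hp0, hp⟩ := hz
      have hmaps : Set.MapsTo τk
          {w : Ω | w ∈ componentField L K PQ ∧ Polynomial.aeval w p = 0}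
          {w : Ω | w ∈ componentField L K PQ ∧ Polynomial.aeval w p = 0} := by
        rintro w ⟨hw1, hw2⟩
        refine ⟨hτkE w hw1, ?_⟩
        have hcomm : τk (Polynomial.aeval w p) = Polynomial.aeval (τk w) p := by
          have h4 : (τk.toRingHom).comp (algebraMap ((PQ.comp J.val).fieldRange) Ω) =
              algebraMap ((PQ.comp J.val).fieldRange) Ω := RingHom.ext fun c => hfix' c
          have h5 := Polynomial.hom_eval₂ p
            (algebraMap ((PQ.comp J.val).fieldRange) Ω) τk.toRingHom w
          rw [h4] at h5
          rw [Polynomial.aeval_def, Polynomial.aeval_def]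
          exact h5
        rw [← hcomm, hw2, map_zero]
      have hinjalg : Function.Injective (algebraMap ((PQ.comp J.val).fieldRange) Ω) :=
        fun a b hab => Subtype.ext hab
      have hne : p.map (algebraMap ((PQ.comp J.val).fieldRange) Ω) ≠ 0 :=
        (Polynomial.map_ne_zero_iff hinjalg).2 hp0
      have hfin : Set.Finite {w : Ω | w ∈ componentField L K PQ ∧ Polynomial.aeval w p = 0} := by
        refine Set.Finite.subset
          (p.map (algebraMap ((PQ.comp J.val).fieldRange) Ω)).roots.toFinset.finite_toSet ?_
        intro w hw
        rw [Finset.mem_coe, Multiset.mem_toFinset, Polynomial.mem_roots hne]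
        rw [Polynomial.IsRoot, Polynomial.eval_map, ← Polynomial.aeval_def]
        exact hw.2
      have hinjS : Set.InjOn τk
          {w : Ω | w ∈ componentField L K PQ ∧ Polynomial.aeval w p = 0} :=
        fun a _ b _ hab => τk.toRingHom.injective hab
      have hzS : (z : Ω) ∈ {w : Ω | w ∈ componentField L K PQ ∧ Polynomial.aeval w p = 0} :=
        ⟨z.2, hp⟩
      obtain ⟨w, hwS, hw⟩ := ((hfin.injOn_iff_bijOn_of_mapsTo hmaps).1 hinjS).surjOn hzS
      exact ⟨⟨w, hwS.1⟩, Subtype.ext hw⟩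
  let σ := AlgEquiv.ofBijective σ0 hbij
  refine ⟨σ, ?_, ?_⟩
  · intro z hzJ
    exact Subtype.ext (hfix' ⟨z.1, hzJ⟩)
  · intro x hx
    exact hτ x

end ExtAux

/-- Corollary `Colored_edge_symmetric`.
Every edge of `G_gen` has image contained in `E_∞`; post-composition by any element of
`A^{PQ}` sends edges of `G_gen` to edges of `G_gen`; and `A^{PQ}` acts transitively on
the edges of `G_gen` (preserving the two-coloring of the vertices, since its elements act
by post-composition on both kinds of vertices). -/
theorem APQ_transitive_on_edges
    (k M : Type*) [Field k] [Field M] [Algebra k M]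
    -- `M` is a finitely generated field extension of `k` of transcendence degree 1
    (hfg : (⊤ : IntermediateField k M).FG)
    (htr : HasTrdegOne k M)
    -- the two intermediate fields `L` and `K`, with `M/L` and `M/K` finite and separable
    (L K : IntermediateField k M)
    [FiniteDimensional L M] [FiniteDimensional K M]
    [Algebra.IsSeparable L M] [Algebra.IsSeparable K M]
    -- an algebraically closed extension `Ω` of `k` of transcendence degree 1
    (Ω : Type*) [Field Ω] [Algebra k Ω] [IsAlgClosed Ω]
    (htrΩ : HasTrdegOne k Ω)
    -- a fixed `k`-algebra embedding `PQ : M → Ω`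
    (PQ : M →ₐ[k] Ω) :
    ∃ hE : ∀ e : M →ₐ[k] Ω, InGenericComponent L K PQ e →
        ∀ x : M, e x ∈ componentField L K PQ,
      -- post-composition by `σ ∈ A^{PQ}` maps edges of `G_gen` to edges of `G_gen`
      (∀ σ ∈ APQ L K PQ, ∀ (e : M →ₐ[k] Ω) (he : InGenericComponent L K PQ e),
        ∃ e' : M →ₐ[k] Ω, InGenericComponent L K PQ e' ∧
          ∀ x : M, (σ ⟨e x, hE e he x⟩ : Ω) = e' x) ∧
      -- `A^{PQ}` acts transitively on the edges of `G_gen`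
      (∀ (e e' : M →ₐ[k] Ω) (he : InGenericComponent L K PQ e),
        InGenericComponent L K PQ e' →
        ∃ σ ∈ APQ L K PQ, ∀ x : M, (σ ⟨e x, hE e he x⟩ : Ω) = e' x) := by
  classical
  refine ⟨fun e he x => mem_componentField_of_inComponent L K PQ he x, ?_, ?_⟩
  · intro σ hσ e he
    have hgood := (good_of_mem_APQ L K PQ hσ).1
    refine ⟨poste L K PQ σ e, hgood e he, fun x => ?_⟩
    exact (poste_apply L K PQ σ e
      (fun x => mem_componentField_of_inComponent L K PQ he x) x).symm
  · intro e e' he he'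
    have hmemPQ : ∀ y : M, PQ y ∈ componentField L K PQ := fun y =>
      mem_componentField_of_inComponent L K PQ Relation.ReflTransGen.refl y
    have main : ∀ g : M →ₐ[k] Ω, InGenericComponent L K PQ g →
        ∃ σ ∈ APQ L K PQ, ∀ x : M,
          (σ ⟨PQ x, hmemPQ x⟩ : Ω) = g x := by
      intro g hg
      induction hg with
      | refl => exact ⟨1, one_mem _, fun x => rfl⟩
      | @tail b c hb step ih =>
        obtain ⟨σ, hσ, hσb⟩ := ih
        have hgood := good_of_mem_APQ L K PQ hσ
        have hc : InGenericComponent L K PQ c := hb.tail step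
        have hmemc : ∀ x, c x ∈ componentField L K PQ := fun x =>
          mem_componentField_of_inComponent L K PQ hc x
        have hmemb : ∀ x, b x ∈ componentField L K PQ := fun x =>
          mem_componentField_of_inComponent L K PQ hb x
        have hfcomp : InGenericComponent L K PQ (poste L K PQ σ⁻¹ c) := hgood.2 c hc
        have hfx : ∀ x, poste L K PQ σ⁻¹ c x = (σ⁻¹ ⟨c x, hmemc x⟩ : Ω) := fun x =>
          poste_apply L K PQ σ⁻¹ c hmemc x
        rcases step with hstep | hstep
        · -- common blue vertex: same restriction to L
          obtain ⟨u, huL, hu⟩ := exists_transcendental_of_finiteDimensional htr L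
          have hfixJ : ∀ x ∈ L, poste L K PQ σ⁻¹ c x = PQ x := by
            intro x hx
            have h1 : b x = c x := AlgHom.congr_fun hstep ⟨x, hx⟩
            have h2 : (⟨c x, hmemc x⟩ : componentField L K PQ) = σ ⟨PQ x, hmemPQ x⟩ :=
              Subtype.ext (by rw [hσb x, h1])
            rw [hfx x, h2]
            exact congrArg Subtype.val (σ.symm_apply_apply ⟨PQ x, hmemPQ x⟩)
          obtain ⟨τ, hτfix, hτval⟩ := ext_aux L K PQ htr htrΩ L huL hu
            (poste L K PQ σ⁻¹ c) hfcomp hfixJ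
          have hτmem : τ ∈ APQ L K PQ := by
            refine SetLike.le_def.1 le_sup_left ?_
            exact (mem_fixingSubgroup_iff _).2 fun y hy => hτfix y hy
          refine ⟨σ * τ, mul_mem hσ hτmem, fun x => ?_⟩
          rw [AlgEquiv.mul_apply]
          have h3 : τ ⟨PQ x, hmemPQ x⟩ = σ⁻¹ ⟨c x, hmemc x⟩ :=
            Subtype.ext (by rw [hτval x (hmemPQ x), hfx x])
          rw [h3]
          exact congrArg Subtype.val (σ.apply_symm_apply ⟨c x, hmemc x⟩)
        · -- common red vertex: same restriction to K
          obtain ⟨u, huK, hu⟩ := exists_transcendental_of_finiteDimensional htr K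
          have hfixJ : ∀ x ∈ K, poste L K PQ σ⁻¹ c x = PQ x := by
            intro x hx
            have h1 : b x = c x := AlgHom.congr_fun hstep ⟨x, hx⟩
            have h2 : (⟨c x, hmemc x⟩ : componentField L K PQ) = σ ⟨PQ x, hmemPQ x⟩ :=
              Subtype.ext (by rw [hσb x, h1])
            rw [hfx x, h2]
            exact congrArg Subtype.val (σ.symm_apply_apply ⟨PQ x, hmemPQ x⟩)
          obtain ⟨τ, hτfix, hτval⟩ := ext_aux L K PQ htr htrΩ K huK hu
            (poste L K PQ σ⁻¹ c) hfcomp hfixJ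
          have hτmem : τ ∈ APQ L K PQ := by
            refine SetLike.le_def.1 le_sup_right ?_
            exact (mem_fixingSubgroup_iff _).2 fun y hy => hτfix y hy
          refine ⟨σ * τ, mul_mem hσ hτmem, fun x => ?_⟩
          rw [AlgEquiv.mul_apply]
          have h3 : τ ⟨PQ x, hmemPQ x⟩ = σ⁻¹ ⟨c x, hmemc x⟩ :=
            Subtype.ext (by rw [hτval x (hmemPQ x), hfx x])
          rw [h3]
          exact congrArg Subtype.val (σ.apply_symm_apply ⟨c x, hmemc x⟩)
    obtain ⟨σe, hσe, hσeval⟩ := main e he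
    obtain ⟨σe', hσe', hσe'val⟩ := main e' he'
    refine ⟨σe' * σe⁻¹, mul_mem hσe' (inv_mem hσe), fun x => ?_⟩
    rw [AlgEquiv.mul_apply]
    have h1 : σe ⟨PQ x, hmemPQ x⟩ =
        ⟨e x, mem_componentField_of_inComponent L K PQ he x⟩ :=
      Subtype.ext (hσeval x)
    have h2 : σe⁻¹ ⟨e x, mem_componentField_of_inComponent L K PQ he x⟩ =
        ⟨PQ x, hmemPQ x⟩ := by
      rw [← h1]
      exact σe.symm_apply_apply ⟨PQ x, hmemPQ x⟩
    rw [h2]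
    exact hσe'val x
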